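/- For integers n ≥ k ≥ 5 and 2 ≤ s ≤ ⌊(k-1)/2⌋, the graph W(n,k,s) := K_s ∨ ((n-k+s)·K_1 ∪ K_{k-2s}) is 2-connected and contains no cycle of length at least k. -/

import Mathlib

open SimpleGraph

/-- Is the vertex in the third component (the clique `K_c`)? -/
def inClq {a b c : ℕ} : (Fin a ⊕ (Fin b ⊕ Fin c)) → Prop
  | Sum.inr (Sum.inr _) => True
  | _ => False

/-- The graph `W(a,b,c) = K_a ∨ (b·K_1 ∪ K_c)`: a clique on `a` vertices joined to
`b` isolated vertices together with a clique on `c` vertices. -/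
def Wgraph (a b c : ℕ) : SimpleGraph (Fin a ⊕ (Fin b ⊕ Fin c)) where
  Adj x y := x ≠ y ∧ (x.isLeft ∨ y.isLeft ∨ (inClq x ∧ inClq y))
  symm := ⟨by
    rintro x y ⟨hne, h⟩
    exact ⟨hne.symm, by tauto⟩⟩
  loopless := ⟨fun x h => h.1 rfl⟩

/-- A graph is 2-connected: connected, at least 3 vertices, and still connected after
deleting any single vertex. -/
def TwoConnected {V : Type*} [Fintype V] (G : SimpleGraph V) : Prop :=
  G.Connected ∧ 3 ≤ Fintype.card V ∧
    ∀ v : V, ((⊤ : G.Subgraph).deleteVerts {v}).coe.Connected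

/-- `G` contains a cycle of length at least `k`. -/
def HasCycleGe {V : Type*} (G : SimpleGraph V) (k : ℕ) : Prop :=
  ∃ (u : V) (c : G.Walk u u), c.IsCycle ∧ k ≤ c.length

section Aux

variable {a b c : ℕ}

/-- In the first (apex clique) part. -/
def fA : (Fin a ⊕ (Fin b ⊕ Fin c)) → Bool
  | Sum.inl _ => true
  | _ => false

/-- In the independent-set part. -/
def fB : (Fin a ⊕ (Fin b ⊕ Fin c)) → Bool
  | Sum.inr (Sum.inl _) => true
  | _ => false

/-- In the second clique. -/
def fC : (Fin a ⊕ (Fin b ⊕ Fin c)) → Bool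
  | Sum.inr (Sum.inr _) => true
  | _ => false

lemma countP_partition (l : List (Fin a ⊕ (Fin b ⊕ Fin c))) :
    l.countP fA + l.countP fB + l.countP fC = l.length := by
  induction l with
  | nil => simp
  | cons x l ih =>
    rcases x with i | i | i <;>
      simp only [List.countP_cons, List.length_cons, fA, fB, fC] <;> simp <;> omega

lemma countP_fA_le {l : List (Fin a ⊕ (Fin b ⊕ Fin c))} (hl : l.Nodup) :
    l.countP fA ≤ a := by
  classical
  rw [List.countP_eq_length_filter]
  have h1 : (l.filter fA).toFinset.card = (l.filter fA).length :=
    List.toFinset_card_of_nodup (hl.filter _)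
  have h2 : (l.filter fA).toFinset ⊆
      Finset.univ.map ⟨Sum.inl, Sum.inl_injective⟩ := by
    intro x hx
    simp only [List.mem_toFinset, List.mem_filter] at hx
    rcases x with i | i | i
    · simp
    · simp [fA] at hx
    · simp [fA] at hx
  have h3 := Finset.card_le_card h2
  simp only [Finset.card_map, Finset.card_univ, Fintype.card_fin] at h3
  omega

lemma countP_fC_le {l : List (Fin a ⊕ (Fin b ⊕ Fin c))} (hl : l.Nodup) :
    l.countP fC ≤ c := by
  classical
  rw [List.countP_eq_length_filter]
  have h1 : (l.filter fC).toFinset.card = (l.filter fC).length :=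
    List.toFinset_card_of_nodup (hl.filter _)
  have h2 : (l.filter fC).toFinset ⊆
      Finset.univ.map ⟨fun i => Sum.inr (Sum.inr i),
        fun i j h => by simpa using h⟩ := by
    intro x hx
    simp only [List.mem_toFinset, List.mem_filter] at hx
    rcases x with i | i | i
    · simp [fC] at hx
    · simp [fC] at hx
    · exact Finset.mem_map.mpr ⟨i, Finset.mem_univ _, rfl⟩
  have h3 := Finset.card_le_card h2
  simp only [Finset.card_map, Finset.card_univ, Fintype.card_fin] at h3
  omega

lemma countP_le_of {α : Type*} {p q : α → Bool} {l : List α}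
    (h : ∀ x ∈ l, p x → q x) : l.countP p ≤ l.countP q := by
  induction l with
  | nil => simp
  | cons x l ih =>
    have hx := h x List.mem_cons_self
    have ih' := ih fun y hy => h y (List.mem_cons_of_mem _ hy)
    by_cases hp : p x = true
    · simp [List.countP_cons, hp, hx hp]; omega
    · simp only [List.countP_cons]
      by_cases hq : q x = true <;> simp [hp, hq] <;> omega

lemma countP_lt_of {α : Type*} {p q : α → Bool} {l : List α}
    (h : ∀ x ∈ l, p x → q x) {d : α} (hd : d ∈ l) (hq : q d = true)
    (hp : p d = false) : l.countP p < l.countP q := by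
  induction l with
  | nil => simp at hd
  | cons x l ih =>
    have ih0 : l.countP p ≤ l.countP q :=
      countP_le_of fun y hy => h y (List.mem_cons_of_mem _ hy)
    rcases List.mem_cons.mp hd with rfl | hd'
    · simp only [List.countP_cons, hp, hq]
      simp; omega
    · have := ih (fun y hy => h y (List.mem_cons_of_mem _ hy)) hd'
      have hx := h x List.mem_cons_self
      by_cases hpx : p x = true
      · simp [List.countP_cons, hpx, hx hpx]; omega
      · simp only [List.countP_cons]
        by_cases hqx : q x = true <;> simp [hpx, hqx] <;> omega

lemma countP_dropLast {α : Type*} (q : α → Bool) (l : List α) (hne : l ≠ [])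
    (h : l.getLast hne = l.head hne) :
    l.dropLast.countP q = l.tail.countP q := by
  rcases l with _ | ⟨x, m⟩
  · simp at hne
  · rcases List.eq_nil_or_concat m with rfl | ⟨m', y, rfl⟩
    · simp
    · have hy : y = x := by simpa using h
      subst hy
      have hdl : (y :: m'.concat y).dropLast = y :: m' := by
        have : (y :: m'.concat y) = ((y :: m') ++ [y]) := by simp
        rw [this, List.dropLast_concat]
      rw [hdl]
      simp [List.concat_eq_append, List.countP_cons, List.countP_append]

lemma fC_const_of_darts {V : Type*} {G : SimpleGraph V} (f : V → Bool)
    {u v : V} (p : G.Walk u v)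
    (h : ∀ d ∈ p.darts, f d.fst = f d.snd) :
    ∀ y ∈ p.support, f y = f u := by
  induction p with
  | nil => intro y hy; simp at hy; subst hy; rfl
  | @cons u w v hadj p ih =>
    intro y hy
    have h1 : f u = f w := h ⟨(u, w), hadj⟩ (by simp [Walk.darts_cons])
    rw [Walk.support_cons, List.mem_cons] at hy
    rcases hy with rfl | hy
    · rfl
    · rw [ih (fun d hd => h d (by simp [Walk.darts_cons, hd])) y hy, h1]

lemma adj_fB_fA {x y : Fin a ⊕ (Fin b ⊕ Fin c)} (h : (Wgraph a b c).Adj x y)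
    (hx : fB x = true) : fA y = true := by
  obtain ⟨-, h⟩ := (h : (x ≠ y ∧ (x.isLeft ∨ y.isLeft ∨ (inClq x ∧ inClq y))))
  rcases x with i | i | i <;> rcases y with j | j | j <;>
    simp_all [fA, fB, fC, inClq]

lemma adj_fC_fA {x y : Fin a ⊕ (Fin b ⊕ Fin c)} (h : (Wgraph a b c).Adj x y)
    (hx : fC x = true) (hy : fC y = false) : fA y = true := by
  obtain ⟨-, h⟩ := (h : (x ≠ y ∧ (x.isLeft ∨ y.isLeft ∨ (inClq x ∧ inClq y))))
  rcases x with i | i | i <;> rcases y with j | j | j <;>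
    simp_all [fA, fB, fC, inClq]

lemma fB_not_fC {x : Fin a ⊕ (Fin b ⊕ Fin c)} (hx : fB x = true) :
    fC x = false := by
  rcases x with i | i | i <;> simp_all [fB, fC]

lemma fC_not_fB {x : Fin a ⊕ (Fin b ⊕ Fin c)} (hx : fC x = true) :
    fB x = false := by
  rcases x with i | i | i <;> simp_all [fB, fC]

lemma adj_inl (i : Fin a) (x : Fin a ⊕ (Fin b ⊕ Fin c)) (h : x ≠ Sum.inl i) :
    (Wgraph a b c).Adj (Sum.inl i) x :=
  (⟨fun h' => h h'.symm, Or.inl rfl⟩ : (Sum.inl i ≠ x ∧ ((Sum.inl i : Fin a ⊕ (Fin b ⊕ Fin c)).isLeft ∨ x.isLeft ∨ (inClq (Sum.inl i : Fin a ⊕ (Fin b ⊕ Fin c)) ∧ inClq x))))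

end Aux

/-- For `n ≥ k ≥ 5` and `2 ≤ s ≤ ⌊(k-1)/2⌋`, the graph
`W(n,k,s) = K_s ∨ ((n-k+s)·K_1 ∪ K_{k-2s})` is 2-connected and has no cycle of
length at least `k`. -/
theorem Wgraph_twoConnected_cycleFree (n k s : ℕ) (hnk : n ≥ k) (hk : k ≥ 5)
    (hs1 : 2 ≤ s) (hs2 : s ≤ (k - 1) / 2) :
    TwoConnected (Wgraph s (n - k + s) (k - 2 * s)) ∧
    ¬ HasCycleGe (Wgraph s (n - k + s) (k - 2 * s)) k := by
  set G := Wgraph s (n - k + s) (k - 2 * s) with hG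
  have h0s : 0 < s := by omega
  have h1s : 1 < s := by omega
  set a0 : Fin s ⊕ (Fin (n - k + s) ⊕ Fin (k - 2 * s)) := Sum.inl ⟨0, h0s⟩ with ha0
  set a1 : Fin s ⊕ (Fin (n - k + s) ⊕ Fin (k - 2 * s)) := Sum.inl ⟨1, h1s⟩ with ha1
  constructor
  · refine ⟨?_, ?_, ?_⟩
    · rw [connected_iff]
      refine ⟨fun x y => ?_, ⟨a0⟩⟩
      have reach : ∀ z, G.Reachable z a0 := by
        intro z
        by_cases hz : z = a0
        · rw [hz]
        · exact (adj_inl _ z hz).symm.reachable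
      exact (reach x).trans (reach y).symm
    · simp only [Fintype.card_sum, Fintype.card_fin]
      omega
    · intro v
      have key : ∀ i : Fin s, Sum.inl i ≠ v →
          (((⊤ : G.Subgraph).deleteVerts {v}).coe).Connected := by
        intro i hi
        rw [connected_iff]
        have hmem : (Sum.inl i : Fin s ⊕ (Fin (n - k + s) ⊕ Fin (k - 2 * s)))
            ∈ ((⊤ : G.Subgraph).deleteVerts {v}).verts := by
          simp [hi]
        refine ⟨fun x y => ?_, ⟨⟨Sum.inl i, hmem⟩⟩⟩
        have reach : ∀ z : ((⊤ : G.Subgraph).deleteVerts {v}).verts,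
            (((⊤ : G.Subgraph).deleteVerts {v}).coe).Reachable z ⟨Sum.inl i, hmem⟩ := by
          intro z
          by_cases hz : (z : Fin s ⊕ (Fin (n - k + s) ⊕ Fin (k - 2 * s))) = Sum.inl i
          · have : z = ⟨Sum.inl i, hmem⟩ := Subtype.ext hz
            rw [this]
          · refine Adj.reachable ?_
            rw [Subgraph.coe_adj]
            have hz2 := z.2
            simp only [Subgraph.deleteVerts_verts, Subgraph.verts_top,
              Set.mem_diff, Set.mem_univ, Set.mem_singleton_iff, true_and] at hz2
            refine Subgraph.deleteVerts_adj.mpr ?_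
            refine ⟨by trivial, hz2, by trivial, by simpa using hi, ?_⟩
            exact ((adj_inl i _ hz)).symm
        exact (reach x).trans (reach y).symm
      by_cases hv : v = a0
      · exact key ⟨1, h1s⟩ (by rw [hv, ha0]; simp)
      · exact key ⟨0, h0s⟩ (fun h => hv (h.symm))
  · rintro ⟨u, cyc, hcyc, hlen⟩
    set t := cyc.support.tail with ht
    have htnd : t.Nodup := hcyc.2
    have htl : t.length = cyc.length := by
      rw [ht, List.length_tail, Walk.length_support]
      simp
    set cA := t.countP fA with hcA
    set cB := t.countP fB with hcB
    set cC := t.countP fC with hcC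
    have hsum : cA + cB + cC = cyc.length := by
      rw [hcA, hcB, hcC, countP_partition, htl]
    have hAle : cA ≤ s := countP_fA_le htnd
    have hCle : cC ≤ k - 2 * s := countP_fC_le htnd
    -- dart counts
    have hsupne : cyc.support ≠ [] := cyc.support_ne_nil
    have hdl : cyc.support.dropLast.countP fA = cA := by
      rw [countP_dropLast fA cyc.support hsupne (by simp)]
    have hdlB : cyc.support.dropLast.countP fB = cB := by
      rw [countP_dropLast fB cyc.support hsupne (by simp)]
    have hfstA : cyc.darts.countP (fun d => fA d.fst) = cA := by
      have := cyc.map_fst_darts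
      rw [← hdl, ← this, List.countP_map]
      rfl
    have hfstB : cyc.darts.countP (fun d => fB d.fst) = cB := by
      have := cyc.map_fst_darts
      rw [← hdlB, ← this, List.countP_map]
      rfl
    have hsndA : cyc.darts.countP (fun d => fA d.snd) = cA := by
      have := cyc.map_snd_darts
      rw [hcA, ht, ← this, List.countP_map]
      rfl
    have hsndB : cyc.darts.countP (fun d => fB d.snd) = cB := by
      have := cyc.map_snd_darts
      rw [hcB, ht, ← this, List.countP_map]
      rfl
    have hBA : cB ≤ cA := by
      rw [← hsndB, ← hfstA]
      exact countP_le_of fun d _ hd => adj_fB_fA d.adj.symm hd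
    rcases Nat.eq_zero_or_pos cB with hB0 | hBpos
    · omega
    rcases Nat.eq_zero_or_pos cC with hC0 | hCpos
    · omega
    -- both cB > 0 and cC > 0 : find a crossing dart and get cB < cA
    have hBlt : cB < cA := by
      obtain ⟨b0, hb0t, hb0⟩ := List.countP_pos_iff.mp (hcB ▸ hBpos)
      obtain ⟨x0, hx0t, hx0⟩ := List.countP_pos_iff.mp (hcC ▸ hCpos)
      have hb0s : b0 ∈ cyc.support := by
        rw [cyc.support_eq_cons]; exact List.mem_cons_of_mem _ hb0t
      have hx0s : x0 ∈ cyc.support := by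
        rw [cyc.support_eq_cons]; exact List.mem_cons_of_mem _ hx0t
      have hcross : ∃ d ∈ cyc.darts, fC d.fst ≠ fC d.snd := by
        by_contra hno
        push_neg at hno
        have hconst := fC_const_of_darts fC cyc (fun d hd => hno d hd)
        have h1 := hconst b0 hb0s
        have h2 := hconst x0 hx0s
        rw [fB_not_fC hb0] at h1
        rw [hx0] at h2
        rw [← h2] at h1
        exact Bool.true_eq_false.mp h1.symm
      obtain ⟨d, hd, hdne⟩ := hcross
      by_cases hdf : fC d.fst = true
      · have hds : fC d.snd = false := by
          cases h : fC d.snd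
          · rfl
          · exact absurd (hdf.trans h.symm) hdne
        have hAsnd : fA d.snd = true := adj_fC_fA d.adj hdf hds
        rw [← hfstB, ← hsndA]
        exact countP_lt_of (fun d' _ hd' => adj_fB_fA d'.adj hd') hd hAsnd
          (fC_not_fB hdf)
      · have hdf' : fC d.fst = false := by
          cases h : fC d.fst
          · rfl
          · exact absurd h hdf
        have hds : fC d.snd = true := by
          cases h : fC d.snd
          · exact absurd (hdf'.trans h.symm) hdne
          · rfl
        have hAfst : fA d.fst = true := adj_fC_fA d.adj.symm hds hdf'
        rw [← hsndB, ← hfstA]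
        exact countP_lt_of (fun d' _ hd' => adj_fB_fA d'.adj.symm hd') hd hAfst
          (fC_not_fB hds)
    omega
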